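/- The Basilica group 𝓑 is not a branch group: there exist no spherically homogeneous rooted tree T and branch group G ≤ Aut(T) such that G is isomorphic to 𝓑. -/

import Mathlib

open Equiv

namespace PaperDefs


/-! ### Spherically homogeneous rooted trees -/

variable (A : ℕ → Type)

/-- Vertices of the spherically homogeneous rooted tree determined by the
sequence of alphabets `A`: words `a₁a₂⋯aₙ` with `aᵢ ∈ A i`. -/
def Vertex : Type := Σ n : ℕ, ∀ i : Fin n, A i

/-- The prefix relation on vertices. -/
def IsPref (v w : Vertex A) : Prop :=
  ∃ h : v.1 ≤ w.1, ∀ i : Fin v.1, v.2 i = w.2 (Fin.castLE h i)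

/-- The automorphism group of the tree: permutations of the vertex set that
preserve the prefix relation. -/
def treeAut : Subgroup (Perm (Vertex A)) where
  carrier := {g | ∀ v w, IsPref A v w ↔ IsPref A (g v) (g w)}
  one_mem' := by intro v w; simp
  mul_mem' := by
    intro a b ha hb v w
    simpa [Equiv.Perm.mul_apply] using (hb v w).trans (ha (b v) (b w))
  inv_mem' := by
    intro a ha v w
    simpa using (ha (a⁻¹ v) (a⁻¹ w)).symm

/-- The stabiliser of the vertex `v` in `G`. -/
def stG (G : Subgroup (Perm (Vertex A))) (v : Vertex A) : Subgroup (Perm (Vertex A)) :=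
  G ⊓ MulAction.stabilizer (Perm (Vertex A)) v

/-- The rigid stabiliser of the vertex `v` in `G`: elements of `G` fixing every
vertex that does not have `v` as a prefix. -/
def rist (G : Subgroup (Perm (Vertex A))) (v : Vertex A) : Subgroup (Perm (Vertex A)) where
  carrier := {g | g ∈ G ∧ ∀ w, ¬ IsPref A v w → g w = w}
  one_mem' := ⟨G.one_mem, fun w _ => by simp⟩
  mul_mem' := by
    rintro a b ⟨haG, ha⟩ ⟨hbG, hb⟩
    refine ⟨G.mul_mem haG hbG, fun w hw => ?_⟩
    simp [Equiv.Perm.mul_apply, hb w hw, ha w hw]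
  inv_mem' := by
    rintro a ⟨haG, ha⟩
    refine ⟨G.inv_mem haG, fun w hw => ?_⟩
    conv_lhs => rw [← ha w hw]
    simp

/-- The rigid stabiliser of the `n`-th level: the subgroup generated by the rigid
stabilisers of the vertices of level `n`. -/
def ristLevel (G : Subgroup (Perm (Vertex A))) (n : ℕ) : Subgroup (Perm (Vertex A)) :=
  ⨆ (v : Vertex A) (_ : v.1 = n), rist A G v

/-- `G` acts spherically transitively: transitively on every level. -/
def SphTrans (G : Subgroup (Perm (Vertex A))) : Prop :=
  ∀ v w : Vertex A, v.1 = w.1 → ∃ g ∈ G, g v = w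

/-- `G ≤ Aut T` is a weakly branch group. -/
def IsWeaklyBranch (G : Subgroup (Perm (Vertex A))) : Prop :=
  G ≤ treeAut A ∧ SphTrans A G ∧ ∀ v : Vertex A, rist A G v ≠ ⊥

/-- `G ≤ Aut T` is a branch group. -/
def IsBranch (G : Subgroup (Perm (Vertex A))) : Prop :=
  IsWeaklyBranch A G ∧ ∀ n : ℕ, (ristLevel A G n).relIndex G ≠ 0

/-! ### Boundary of the tree -/

/-- The boundary of the tree: infinite words. -/
def Boundary : Type := ∀ i : ℕ, A i

/-- The length-`n` prefix of a boundary point. -/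
def bdryPrefix (ξ : Boundary A) (n : ℕ) : Vertex A := ⟨n, fun i => ξ i⟩

/-- The support of a subgroup `H` on the boundary: boundary points moved by some
element of `H` (a boundary point is moved by a tree automorphism iff one of its
finite prefixes is moved). -/
def supp (H : Subgroup (Perm (Vertex A))) : Set (Boundary A) :=
  {ξ | ∃ h ∈ H, ∃ n : ℕ, h (bdryPrefix A ξ n) ≠ bdryPrefix A ξ n}

/-! ### Sections / projections -/

/-- The shifted alphabet sequence, describing the subtree rooted at a vertex of
level `n`. -/
def shift (n : ℕ) : ℕ → Type := fun i => A (i + n)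

/-- Concatenation of a vertex `v` of level `n` with a vertex of the subtree `T_v`
(viewed in the shifted tree). -/
def concat (n : ℕ) (v : Vertex A) (hv : v.1 = n) (w : Vertex (shift A n)) : Vertex A :=
  ⟨n + w.1, fun i =>
    if h : (i : ℕ) < n then v.2 ⟨(i : ℕ), by omega⟩
    else cast (congrArg A (by have := i.isLt; omega : (i : ℕ) - n + n = (i : ℕ)))
      (w.2 ⟨(i : ℕ) - n, by have := i.isLt; omega⟩)⟩

/-- `projStab A G n v hv` is `G_v = φ_v(St_G(v))`, the image under the projection
`φ_v` of the stabiliser of `v` in `G`, realised as a subgroup of the automorphisms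
of the subtree `T_v` (identified with the tree on the shifted alphabet sequence):
it consists of those `σ` for which some `g ∈ G` stabilises `v` and satisfies
`g (v·w) = v·(σ w)` for every vertex `w` of the subtree. -/
def projStab (G : Subgroup (Perm (Vertex A))) (n : ℕ) (v : Vertex A) (hv : v.1 = n) :
    Subgroup (Perm (Vertex (shift A n))) where
  carrier := {σ | ∃ g ∈ G, g v = v ∧ ∀ w, g (concat A n v hv w) = concat A n v hv (σ w)}
  one_mem' := ⟨1, G.one_mem, by simp, fun w => by simp⟩
  mul_mem' := by
    rintro σ τ ⟨g, hgG, hgv, hg⟩ ⟨g', hg'G, hg'v, hg'⟩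
    refine ⟨g * g', G.mul_mem hgG hg'G, by simp [Equiv.Perm.mul_apply, hg'v, hgv], fun w => ?_⟩
    simp [Equiv.Perm.mul_apply, hg' w, hg (τ w)]
  inv_mem' := by
    rintro σ ⟨g, hgG, hgv, hg⟩
    refine ⟨g⁻¹, G.inv_mem hgG, by simpa using (congrArg (⇑g⁻¹) hgv).symm, fun w => ?_⟩
    have h1 : g (concat A n v hv (σ⁻¹ w)) = concat A n v hv w := by
      rw [hg (σ⁻¹ w)]; simp
    calc g⁻¹ (concat A n v hv w) = g⁻¹ (g (concat A n v hv (σ⁻¹ w))) := by rw [h1]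
      _ = concat A n v hv (σ⁻¹ w) := by simp

/-! ### Group-theoretic notions -/

/-- `H` is a normal subgroup of `K` (both being subgroups of an ambient group). -/
def NormalIn {P : Type*} [Group P] (H K : Subgroup P) : Prop :=
  H ≤ K ∧ ∀ k ∈ K, ∀ h ∈ H, k * h * k⁻¹ ∈ H

/-- `H` is `k`-subnormal in `G`: there is a chain `H = c k ⊴ ⋯ ⊴ c 0 = G`. -/
def SubnormalIn {P : Type*} [Group P] (H G : Subgroup P) (k : ℕ) : Prop :=
  ∃ c : ℕ → Subgroup P, c 0 = G ∧ c k = H ∧ ∀ i < k, NormalIn (c (i + 1)) (c i)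

/-- The iterated derived subgroup `H⁽ᵏ⁾` of a subgroup `H` of an ambient group. -/
def derivedIter {P : Type*} [Group P] (H : Subgroup P) : ℕ → Subgroup P
  | 0 => H
  | k + 1 => ⁅derivedIter H k, derivedIter H k⁆

/-- The class `𝓜𝓕` of groups all of whose maximal subgroups have finite index. -/
def MF (Γ : Type*) [Group Γ] : Prop :=
  ∀ M : Subgroup Γ, IsCoatom M → M.index ≠ 0

/-- Every proper quotient of `Γ` belongs to `𝓜𝓕`. -/
def QuotientsMF (Γ : Type*) [Group Γ] : Prop :=
  ∀ (N : Subgroup Γ) [N.Normal], N ≠ ⊥ → MF (Γ ⧸ N)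

/-- `H` is a prodense subgroup of `Γ`: `HN = Γ` for every nontrivial normal `N ⊴ Γ`. -/
def Prodense {Γ : Type*} [Group Γ] (H : Subgroup Γ) : Prop :=
  ∀ N : Subgroup Γ, N.Normal → N ≠ ⊥ → H ⊔ N = ⊤

/-- `H` is a prodense subgroup of `G`, both being subgroups of an ambient group:
`H ≤ G` and `HN = G` for every nontrivial subgroup `N ≤ G` normal in `G`. -/
def ProdenseIn {P : Type*} [Group P] (H G : Subgroup P) : Prop :=
  H ≤ G ∧ ∀ N : Subgroup P, N ≤ G → NormalIn N G → N ≠ ⊥ → H ⊔ N = G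

/-- `M` is a maximal subgroup of `G` (both subgroups of an ambient group). -/
def MaximalIn {P : Type*} [Group P] (M G : Subgroup P) : Prop :=
  M < G ∧ ∀ K : Subgroup P, M < K → K ≤ G → K = G



/-! ### Regular rooted trees `X*` (vertices = finite words = lists) -/

variable (X : Type)

/-- The automorphism group of the regular rooted tree `X*`: permutations of the
set of finite words preserving the prefix relation. -/
def treeAutL : Subgroup (Perm (List X)) where
  carrier := {g | ∀ v w : List X, v <+: w ↔ g v <+: g w}
  one_mem' := by intro v w; simp
  mul_mem' := by
    intro a b ha hb v w
    simpa [Equiv.Perm.mul_apply] using (hb v w).trans (ha (b v) (b w))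
  inv_mem' := by
    intro a ha v w
    simpa using (ha (a⁻¹ v) (a⁻¹ w)).symm

/-- The rigid stabiliser of the vertex `v ∈ X*` in `H`. -/
def ristL (H : Subgroup (Perm (List X))) (v : List X) : Subgroup (Perm (List X)) where
  carrier := {g | g ∈ H ∧ ∀ w, ¬ v <+: w → g w = w}
  one_mem' := ⟨H.one_mem, fun w _ => by simp⟩
  mul_mem' := by
    rintro a b ⟨haG, ha⟩ ⟨hbG, hb⟩
    refine ⟨H.mul_mem haG hbG, fun w hw => ?_⟩
    simp [Equiv.Perm.mul_apply, hb w hw, ha w hw]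
  inv_mem' := by
    rintro a ⟨haG, ha⟩
    refine ⟨H.inv_mem haG, fun w hw => ?_⟩
    conv_lhs => rw [← ha w hw]
    simp

/-- The rigid stabiliser of the `n`-th level. -/
def ristLevelL (H : Subgroup (Perm (List X))) (n : ℕ) : Subgroup (Perm (List X)) :=
  ⨆ (v : List X) (_ : v.length = n), ristL X H v

/-- Spherically transitive action on `X*`. -/
def SphTransL (G : Subgroup (Perm (List X))) : Prop :=
  ∀ v w : List X, v.length = w.length → ∃ g ∈ G, g v = w

/-- `G ≤ Aut(X*)` is a weakly branch group. -/
def IsWeaklyBranchL (G : Subgroup (Perm (List X))) : Prop :=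
  G ≤ treeAutL X ∧ SphTransL X G ∧ ∀ v : List X, ristL X G v ≠ ⊥

/-- `projL X v H = φ_v(St_H(v))`: the image under the projection `φ_v` of the
stabiliser of `v` in `H`, where the subtree at `v` is identified with `X*` itself;
it consists of those `σ` for which some `g ∈ H` satisfies `g (v·w) = v·(σ w)`
for every word `w`. -/
def projL (v : List X) (H : Subgroup (Perm (List X))) : Subgroup (Perm (List X)) where
  carrier := {σ | ∃ g ∈ H, ∀ w : List X, g (v ++ w) = v ++ σ w}
  one_mem' := ⟨1, H.one_mem, fun w => by simp⟩
  mul_mem' := by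
    rintro σ τ ⟨g, hgH, hg⟩ ⟨g', hg'H, hg'⟩
    exact ⟨g * g', H.mul_mem hgH hg'H, fun w => by
      simp [Equiv.Perm.mul_apply, hg' w, hg (τ w)]⟩
  inv_mem' := by
    rintro σ ⟨g, hgH, hg⟩
    refine ⟨g⁻¹, H.inv_mem hgH, fun w => ?_⟩
    have h1 : g (v ++ σ⁻¹ w) = v ++ w := by
      rw [hg (σ⁻¹ w)]; simp
    calc g⁻¹ (v ++ w) = g⁻¹ (g (v ++ σ⁻¹ w)) := by rw [h1]
      _ = v ++ σ⁻¹ w := by simp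

/-- `G ≤ Aut(X*)` is self-similar: `G_v ≤ G` for every vertex. -/
def SelfSimilarL (G : Subgroup (Perm (List X))) : Prop :=
  ∀ v : List X, projL X v G ≤ G

/-! ### The Basilica group -/

mutual
  /-- The generator `a` of the Basilica group, as a function on words. -/
  def aF : List Bool → List Bool
    | [] => []
    | false :: w => false :: w
    | true :: w => true :: bF w
  /-- The generator `b` of the Basilica group, as a function on words. -/
  def bF : List Bool → List Bool
    | [] => []
    | false :: w => true :: aF w
    | true :: w => false :: w
end

mutual
  /-- The inverse of `aF`. -/
  def aI : List Bool → List Bool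
    | [] => []
    | false :: w => false :: w
    | true :: w => true :: bI w
  /-- The inverse of `bF`. -/
  def bI : List Bool → List Bool
    | [] => []
    | false :: w => true :: w
    | true :: w => false :: aI w
end

mutual
  theorem aI_aF : ∀ w, aI (aF w) = w
    | [] => rfl
    | false :: _ => rfl
    | true :: w => by simp [aF, aI, bI_bF w]
  theorem bI_bF : ∀ w, bI (bF w) = w
    | [] => rfl
    | false :: w => by simp [bF, bI, aI_aF w]
    | true :: _ => rfl
end

mutual
  theorem aF_aI : ∀ w, aF (aI w) = w
    | [] => rfl
    | false :: _ => rfl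
    | true :: w => by simp [aI, aF, bF_bI w]
  theorem bF_bI : ∀ w, bF (bI w) = w
    | [] => rfl
    | false :: _ => by simp [bI, bF]
    | true :: w => by simp [bI, bF, aF_aI w]
end

/-- The generator `a` of the Basilica group. -/
def aP : Perm (List Bool) := ⟨aF, aI, aI_aF, aF_aI⟩

/-- The generator `b` of the Basilica group. -/
def bP : Perm (List Bool) := ⟨bF, bI, bI_bF, bF_bI⟩

/-- The Basilica group `𝓑 = ⟨a, b⟩ ≤ Aut({0,1}*)`. -/
def BasilicaGroup : Subgroup (Perm (List Bool)) := Subgroup.closure {aP, bP}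

/-- The image of a subgroup of the first-level stabiliser under
`ψ₁ = (φ₀, φ₁)`: pairs `(σ₀, σ₁)` arising as the pair of first-level sections of
some `g ∈ H`. -/
def psi1Image (H : Subgroup (Perm (List Bool))) :
    Subgroup (Perm (List Bool) × Perm (List Bool)) where
  carrier := {p | ∃ g ∈ H, ∀ w : List Bool,
      g (false :: w) = false :: p.1 w ∧ g (true :: w) = true :: p.2 w}
  one_mem' := ⟨1, H.one_mem, fun w => by simp⟩
  mul_mem' := by
    rintro p q ⟨g, hgH, hg⟩ ⟨g', hg'H, hg'⟩
    refine ⟨g * g', H.mul_mem hgH hg'H, fun w => ⟨?_, ?_⟩⟩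
    · simp [Equiv.Perm.mul_apply, (hg' w).1, (hg (q.1 w)).1]
    · simp [Equiv.Perm.mul_apply, (hg' w).2, (hg (q.2 w)).2]
  inv_mem' := by
    rintro p ⟨g, hgH, hg⟩
    refine ⟨g⁻¹, H.inv_mem hgH, fun w => ⟨?_, ?_⟩⟩
    · have h1 : g (false :: p.1⁻¹ w) = false :: w := by
        rw [(hg (p.1⁻¹ w)).1]; simp
      have h2 : g⁻¹ (false :: w) = false :: p.1⁻¹ w := by
        rw [← h1]; simp
      simpa using h2
    · have h1 : g (true :: p.2⁻¹ w) = true :: w := by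
        rw [(hg (p.2⁻¹ w)).2]; simp
      have h2 : g⁻¹ (true :: w) = true :: p.2⁻¹ w := by
        rw [← h1]; simp
      simpa using h2

/-! ### Machinery for the proof that the Basilica group is not branch -/

namespace NB

/-- A letter: `(isB, isInv)`. -/
abbrev Letter := Bool × Bool

abbrev Word := List Letter

def evalL : Letter → Perm (List Bool)
  | (false, false) => aP
  | (false, true) => aP⁻¹
  | (true, false) => bP
  | (true, true) => bP⁻¹

/-- Evaluation of a word. -/
def Ev (w : Word) : Perm (List Bool) := (w.map evalL).prod

def invL (l : Letter) : Letter := (l.1, !l.2)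

def invW (w : Word) : Word := (w.map invL).reverse

/-- Root parity of a letter (does it swap the two subtrees). -/
def pL (l : Letter) : Bool := l.1

/-- Root parity of a word. -/
def par (w : Word) : Bool := w.foldr (fun l b => xor (pL l) b) false

/-- The section of a letter at input side `j`. -/
def secL : Letter → Bool → Word
  | (false, false), false => []
  | (false, false), true => [(true, false)]
  | (false, true), false => []
  | (false, true), true => [(true, true)]
  | (true, false), false => [(false, false)]
  | (true, false), true => []
  | (true, true), false => []
  | (true, true), true => [(false, true)]

/-- The section of a word at input side `i`. -/
def sec (i : Bool) : Word → Word
  | [] => []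
  | l :: w => secL l (xor i (par w)) ++ sec i w

/-- Exponent-sum vector `(χ_a, χ_b)` of a letter. -/
def chiL : Letter → ℤ × ℤ
  | (false, false) => (1, 0)
  | (false, true) => (-1, 0)
  | (true, false) => (0, 1)
  | (true, true) => (0, -1)

def chi (w : Word) : ℤ × ℤ := (w.map chiL).sum

@[simp] lemma Ev_nil : Ev [] = 1 := rfl

@[simp] lemma Ev_cons' (l : Letter) (w : Word) : Ev (l :: w) = evalL l * Ev w := by
  simp [Ev]

lemma Ev_append (v w : Word) : Ev (v ++ w) = Ev v * Ev w := by
  simp [Ev, List.prod_append]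

@[simp] lemma par_nil : par [] = false := rfl

@[simp] lemma par_cons (l : Letter) (w : Word) : par (l :: w) = xor (pL l) (par w) := rfl

@[simp] lemma chi_nil : chi [] = 0 := rfl

@[simp] lemma chi_cons (l : Letter) (w : Word) : chi (l :: w) = chiL l + chi w := by
  simp [chi]

lemma chi_append (v w : Word) : chi (v ++ w) = chi v + chi w := by
  simp [chi]

@[simp] lemma sec_nil (i : Bool) : sec i [] = [] := rfl

@[simp] lemma sec_cons (i : Bool) (l : Letter) (w : Word) :
    sec i (l :: w) = secL l (xor i (par w)) ++ sec i w := rfl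

lemma evalL_invL (l : Letter) : evalL (invL l) = (evalL l)⁻¹ := by
  rcases l with ⟨b, s⟩
  cases b <;> cases s <;> simp [invL, evalL]

lemma Ev_invW (w : Word) : Ev (invW w) = (Ev w)⁻¹ := by
  induction w with
  | nil => simp [invW, Ev]
  | cons l w ih =>
      have h : invW (l :: w) = invW w ++ [invL l] := by simp [invW]
      rw [h, Ev_append, ih, show Ev (l :: w) = evalL l * Ev w from Ev_cons' l w,
        mul_inv_rev]
      simp [Ev, evalL_invL]

lemma chiL_invL (l : Letter) : chiL (invL l) = -chiL l := by
  rcases l with ⟨b, s⟩; cases b <;> cases s <;> simp [invL, chiL]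

lemma chi_invW (w : Word) : chi (invW w) = -chi w := by
  induction w with
  | nil => simp [invW]
  | cons l w ih =>
      have : invW (l :: w) = invW w ++ [invL l] := by simp [invW]
      rw [this, chi_append, ih, chi_cons]
      simp only [chi, List.map_cons, List.map_nil, List.sum_cons, List.sum_nil, chiL_invL]
      abel

/-- Action of one letter on a cons. -/
lemma evalL_apply_cons (l : Letter) (j : Bool) (u : List Bool) :
    evalL l (j :: u) = (xor j (pL l)) :: Ev (secL l j) u := by
  rcases l with ⟨b, s⟩
  cases b <;> cases s <;> cases j <;>
    simp [evalL, secL, pL, aP, bP, aF, bF, aI, bI, Equiv.Perm.inv_def]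

/-- The master cons formula. -/
lemma Ev_apply_cons (w : Word) (i : Bool) (u : List Bool) :
    Ev w (i :: u) = (xor i (par w)) :: Ev (sec i w) u := by
  induction w generalizing u with
  | nil => simp
  | cons l w ih =>
      rw [Ev_cons', Equiv.Perm.mul_apply, ih, evalL_apply_cons, sec_cons, Ev_append,
        Equiv.Perm.mul_apply, par_cons]
      congr 1
      cases i <;> cases par w <;> cases pL l <;> rfl

@[simp] lemma Ev_apply_nil (w : Word) : Ev w [] = [] := by
  induction w with
  | nil => rfl
  | cons l w ih =>
      rw [Ev_cons', Equiv.Perm.mul_apply, ih]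
      rcases l with ⟨b, s⟩
      cases b <;> cases s <;> simp [evalL, aP, bP, aF, bF, aI, bI, Equiv.Perm.inv_def]

lemma Ev_length (w : Word) (v : List Bool) : (Ev w v).length = v.length := by
  induction v generalizing w with
  | nil => simp
  | cons i u ih => rw [Ev_apply_cons]; simp [ih]

/-- Lengths of the two sections add up to the length of the word. -/
lemma sec_length (w : Word) :
    (sec false w).length + (sec true w).length = w.length := by
  induction w with
  | nil => simp
  | cons l w ih =>
      simp only [sec_cons, List.length_append, List.length_cons]
      have h : (secL l (xor false (par w))).length + (secL l (xor true (par w))).length = 1 := by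
        rcases l with ⟨b, s⟩; cases b <;> cases s <;> cases par w <;> rfl
      omega

/-- Sum of the section `χ`-vectors is the swap of the `χ`-vector. -/
lemma chi_sec_sum (w : Word) :
    chi (sec false w) + chi (sec true w) = ((chi w).2, (chi w).1) := by
  induction w with
  | nil => simp; rfl
  | cons l w ih =>
      simp only [sec_cons, chi_append, chi_cons]
      have h : chi (secL l (xor false (par w))) + chi (secL l (xor true (par w)))
          = ((chiL l).2, (chiL l).1) := by
        rcases l with ⟨b, s⟩; cases b <;> cases s <;> cases par w <;> decide
      rw [Prod.ext_iff] at *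
      constructor <;> simp_all <;> linarith [ih.1, ih.2, h.1, h.2]

/-- The linkage identity. -/
lemma chi_sec_linkage (w : Word) :
    (chi (sec false w)).1 - (chi (sec true w)).1 = (if par w then 1 else 0 : ℤ) := by
  induction w with
  | nil => simp
  | cons l w ih =>
      simp only [sec_cons, chi_append, par_cons]
      have h : (chi (secL l (xor false (par w)))).1 - (chi (secL l (xor true (par w)))).1
          = (if pL l then (if par w then -1 else 1) else 0 : ℤ) := by
        rcases l with ⟨b, s⟩; cases b <;> cases s <;> cases par w <;> decide
      rw [Prod.fst_add, Prod.fst_add]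
      have key : ∀ p q : Bool, (if xor p q then (1:ℤ) else 0)
          = (if p then (if q then -1 else 1) else 0) + (if q then 1 else 0) := by decide
      show _ = (if xor (pL l) (par w) then (1:ℤ) else 0)
      rw [key (pL l) (par w)]
      linarith

end NB
namespace NB

/-- `g` acts trivially on all words of length at most `m`. -/
def TrivL (m : ℕ) (g : Perm (List Bool)) : Prop :=
  ∀ v : List Bool, v.length ≤ m → g v = v

lemma TrivL.mono {m' m : ℕ} {g} (h : m' ≤ m) (hg : TrivL m g) : TrivL m' g :=
  fun v hv => hg v (hv.trans h)

lemma TrivL.par {m : ℕ} {w : Word} (h : TrivL (m + 1) (Ev w)) : par w = false := by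
  have h1 := h [false] (by simp only [List.length_cons, List.length_nil]; omega)
  rw [show ([false] : List Bool) = false :: [] from rfl, Ev_apply_cons] at h1
  simpa using h1

lemma TrivL.sec {m : ℕ} {w : Word} (h : TrivL (m + 1) (Ev w)) (i : Bool) :
    TrivL m (Ev (NB.sec i w)) := by
  intro v hv
  have h1 := h (i :: v) (by simp only [List.length_cons]; omega)
  rw [Ev_apply_cons, h.par] at h1
  simpa using h1

/-- Valuation lemma: deep level-triviality forces high 2-divisibility of `χ`. -/
lemma val_lemma : ∀ (k : ℕ) (w : Word), TrivL (2 * k) (Ev w) →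
    ((2 : ℤ) ^ k ∣ (chi w).1 ∧ (2 : ℤ) ^ k ∣ (chi w).2) := by
  intro k
  induction k with
  | zero => intro w _; simp
  | succ k ih =>
      intro w h
      have h' : TrivL (2 * k + 1 + 1) (Ev w) := h.mono (by omega)
      have hp : par w = false := h'.par
      have hs : ∀ i, TrivL (2 * k + 1) (Ev (sec i w)) := fun i => h'.sec i
      have hsp : ∀ i, par (sec i w) = false := fun i => (hs i).par
      have hss : ∀ i j, TrivL (2 * k) (Ev (sec j (sec i w))) := fun i j => (hs i).sec j
      have ihs := fun i j => ih (sec j (sec i w)) (hss i j)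
      -- identities
      have hsum := chi_sec_sum w
      have hsum0 := chi_sec_sum (sec false w)
      have hsum1 := chi_sec_sum (sec true w)
      have hlink := chi_sec_linkage w
      have hlink0 := chi_sec_linkage (sec false w)
      have hlink1 := chi_sec_linkage (sec true w)
      rw [hp] at hlink; rw [hsp false] at hlink0; rw [hsp true] at hlink1
      norm_num at hlink hlink0 hlink1
      have e1 : (chi w).1 = (chi (sec false w)).2 + (chi (sec true w)).2 := by
        have := congrArg Prod.snd hsum; simpa [eq_comm] using this
      have e2 : (chi w).2 = (chi (sec false w)).1 + (chi (sec true w)).1 := by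
        have := congrArg Prod.fst hsum; simpa [eq_comm] using this
      have e3 : ∀ i, (chi (sec i w)).2
          = (chi (sec false (sec i w))).1 + (chi (sec true (sec i w))).1 := by
        intro i
        have := congrArg Prod.fst (chi_sec_sum (sec i w)); simpa [eq_comm] using this
      have e4 : ∀ i, (chi (sec i w)).1
          = (chi (sec false (sec i w))).2 + (chi (sec true (sec i w))).2 := by
        intro i
        have := congrArg Prod.snd (chi_sec_sum (sec i w)); simpa [eq_comm] using this
      have hlinki : ∀ i, (chi (sec false (sec i w))).1 = (chi (sec true (sec i w))).1 := by
        intro i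
        have := chi_sec_linkage (sec i w); rw [hsp i] at this; norm_num at this; linarith
      constructor
      · -- (chi w).1
        rw [e1]
        have d0 : (2:ℤ)^(k+1) ∣ (chi (sec false w)).2 := by
          rw [e3 false, ← hlinki false, ← two_mul, pow_succ, mul_comm ((2:ℤ)^k) 2]
          exact mul_dvd_mul_left 2 (ihs false false).1
        have d1 : (2:ℤ)^(k+1) ∣ (chi (sec true w)).2 := by
          rw [e3 true, ← hlinki true, ← two_mul, pow_succ, mul_comm ((2:ℤ)^k) 2]
          exact mul_dvd_mul_left 2 (ihs true false).1
        exact dvd_add d0 d1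
      · rw [e2]
        have hl : (chi (sec false w)).1 = (chi (sec true w)).1 := by linarith
        rw [← hl, ← two_mul, pow_succ, mul_comm ((2:ℤ)^k) 2]
        refine mul_dvd_mul_left 2 ?_
        rw [e4 false]
        exact dvd_add (ihs false false).2 (ihs false true).2

lemma int_eq_zero_of_dvd (n : ℤ) (h : ∀ k : ℕ, (2 : ℤ) ^ k ∣ n) : n = 0 := by
  by_contra hn
  have h1 : (2 : ℤ) ^ n.natAbs ≤ |n| :=
    Int.le_of_dvd (abs_pos.mpr hn) ((dvd_abs _ _).mpr (h n.natAbs))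
  have h3 : |n| = (n.natAbs : ℤ) := Int.abs_eq_natAbs n
  have h4 : ((2:ℤ)) ^ n.natAbs = ((2 ^ n.natAbs : ℕ) : ℤ) := by push_cast; ring
  rw [h3, h4] at h1
  have h5 : 2 ^ n.natAbs ≤ n.natAbs := Int.ofNat_le.mp h1
  exact Nat.lt_irrefl _ (Nat.lt_of_lt_of_le (Nat.lt_two_pow_self (n := n.natAbs)) h5)

/-- Relations of the Basilica group are balanced: the key well-definedness fact. -/
lemma chi_eq_zero_of_Ev_eq_one {w : Word} (h : Ev w = 1) : chi w = 0 := by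
  have ht : ∀ k, TrivL (2 * k) (Ev w) := by intro k v _; rw [h]; rfl
  have h1 := fun k => (val_lemma k w (ht k)).1
  have h2 := fun k => (val_lemma k w (ht k)).2
  have z1 := int_eq_zero_of_dvd _ h1
  have z2 := int_eq_zero_of_dvd _ h2
  exact Prod.ext z1 z2

lemma chi_eq_of_Ev_eq {u u' : Word} (h : Ev u = Ev u') : chi u = chi u' := by
  have h1 : Ev (u ++ invW u') = 1 := by
    rw [Ev_append, Ev_invW, h, mul_inv_cancel]
  have := chi_eq_zero_of_Ev_eq_one h1
  rw [chi_append, chi_invW] at this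
  have := congrArg (· + chi u') this
  simpa [add_assoc] using this

/-- Words evaluate into the Basilica group, and conversely. -/
def wordSub : Subgroup (Perm (List Bool)) where
  carrier := {g | ∃ w : Word, Ev w = g}
  one_mem' := ⟨[], rfl⟩
  mul_mem' := by
    rintro a b ⟨u, rfl⟩ ⟨v, rfl⟩
    exact ⟨u ++ v, Ev_append u v⟩
  inv_mem' := by
    rintro a ⟨u, rfl⟩
    exact ⟨invW u, Ev_invW u⟩

lemma evalL_mem (l : Letter) : evalL l ∈ BasilicaGroup := by
  have ha : aP ∈ BasilicaGroup := Subgroup.subset_closure (by simp)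
  have hb : bP ∈ BasilicaGroup := Subgroup.subset_closure (by simp)
  rcases l with ⟨b, s⟩
  cases b <;> cases s <;> simp [evalL] <;>
    first
      | exact ha
      | exact hb
      | exact Subgroup.inv_mem _ ha
      | exact Subgroup.inv_mem _ hb

lemma Ev_mem (w : Word) : Ev w ∈ BasilicaGroup := by
  induction w with
  | nil => exact Subgroup.one_mem _
  | cons l w ih => rw [Ev_cons']; exact Subgroup.mul_mem _ (evalL_mem l) ih

lemma mem_B_iff (g : Perm (List Bool)) : g ∈ BasilicaGroup ↔ ∃ w : Word, Ev w = g := by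
  constructor
  · intro hg
    have : BasilicaGroup ≤ wordSub := by
      rw [BasilicaGroup, Subgroup.closure_le]
      rintro x (rfl | rfl)
      · exact ⟨[(false, false)], by simp [Ev, evalL]⟩
      · exact ⟨[(true, false)], by simp [Ev, evalL]⟩
    exact this hg
  · rintro ⟨w, rfl⟩; exact Ev_mem w

-- The abelianisation character of the Basilica group.
open Classical in
noncomputable def Xi0 (g : Perm (List Bool)) : ℤ × ℤ :=
  if h : ∃ w : Word, Ev w = g then chi h.choose else 0

lemma Xi0_Ev (w : Word) : Xi0 (Ev w) = chi w := by
  have h : ∃ u : Word, Ev u = Ev w := ⟨w, rfl⟩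
  rw [Xi0]
  rw [dif_pos h]
  exact chi_eq_of_Ev_eq h.choose_spec

lemma Xi0_mul {g h : Perm (List Bool)} (hg : g ∈ BasilicaGroup) (hh : h ∈ BasilicaGroup) :
    Xi0 (g * h) = Xi0 g + Xi0 h := by
  obtain ⟨u, rfl⟩ := (mem_B_iff g).mp hg
  obtain ⟨v, rfl⟩ := (mem_B_iff h).mp hh
  rw [← Ev_append, Xi0_Ev, Xi0_Ev, Xi0_Ev, chi_append]

lemma Xi0_one : Xi0 1 = 0 := by
  rw [← Ev_nil, Xi0_Ev, chi_nil]

lemma Xi0_inv {g : Perm (List Bool)} (hg : g ∈ BasilicaGroup) : Xi0 g⁻¹ = -Xi0 g := by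
  obtain ⟨u, rfl⟩ := (mem_B_iff g).mp hg
  rw [← Ev_invW, Xi0_Ev, Xi0_Ev, chi_invW]

lemma Xi0_conj {g h : Perm (List Bool)} (hg : g ∈ BasilicaGroup) (hh : h ∈ BasilicaGroup) :
    Xi0 (g * h * g⁻¹) = Xi0 h := by
  rw [Xi0_mul (Subgroup.mul_mem _ hg hh) (Subgroup.inv_mem _ hg),
    Xi0_mul hg hh, Xi0_inv hg]
  abel

/-- `Ξ` as a group homomorphism on the Basilica group. -/
noncomputable def XiM : ↥BasilicaGroup →* Multiplicative (ℤ × ℤ) where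
  toFun g := Multiplicative.ofAdd (Xi0 ↑g)
  map_one' := by simp [Xi0_one]
  map_mul' g h := by
    simp only [Subgroup.coe_mul]
    rw [Xi0_mul g.2 h.2]
    rfl

end NB
namespace NB

/-- The determinant pairing on `ℤ × ℤ`. -/
def dt (P Q : ℤ × ℤ) : ℤ := P.1 * Q.2 - P.2 * Q.1

lemma chi_comp1 (w : Word) :
    (chi w).1 = (chi (sec false w)).2 + (chi (sec true w)).2 := by
  have := congrArg Prod.snd (chi_sec_sum w); simpa [eq_comm] using this

lemma chi_comp2 (w : Word) :
    (chi w).2 = (chi (sec false w)).1 + (chi (sec true w)).1 := by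
  have := congrArg Prod.fst (chi_sec_sum w); simpa [eq_comm] using this

/-- Sections of commuting elements satisfy the mixed commutation relations. -/
lemma comm_sec {w₁ w₂ : Word} (h : Ev w₁ * Ev w₂ = Ev w₂ * Ev w₁) (i : Bool) :
    Ev (sec (xor i (par w₂)) w₁) * Ev (sec i w₂)
      = Ev (sec (xor i (par w₁)) w₂) * Ev (sec i w₁) := by
  apply Equiv.ext
  intro u
  have h1 := DFunLike.congr_fun h (i :: u)
  rw [Equiv.Perm.mul_apply, Equiv.Perm.mul_apply, Ev_apply_cons w₂, Ev_apply_cons w₁,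
    Ev_apply_cons w₁, Ev_apply_cons w₂] at h1
  rw [Equiv.Perm.mul_apply, Equiv.Perm.mul_apply]
  exact (List.cons_eq_cons.mp h1).2

lemma Ev_eq_one_of {w : Word} (hp : par w = false) (h0 : Ev (sec false w) = 1)
    (h1 : Ev (sec true w) = 1) : Ev w = 1 := by
  apply Equiv.ext
  intro v
  cases v with
  | nil => simp
  | cons i u =>
      rw [Ev_apply_cons, hp]
      cases i <;> simp [h0, h1]

/-- Induction hypothesis predicate for the main commutation theorem. -/
def IHP (M : ℕ) : Prop := ∀ u₁ u₂ : Word, u₁.length + u₂.length < M →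
  Ev u₁ * Ev u₂ = Ev u₂ * Ev u₁ → dt (chi u₁) (chi u₂) = 0

/-- Case A: both words level-1 inactive. -/
lemma caseA {M : ℕ} (ih : IHP M) {w₁ w₂ : Word} (hlen : w₁.length + w₂.length ≤ M)
    (hc : Ev w₁ * Ev w₂ = Ev w₂ * Ev w₁) (hp₁ : par w₁ = false) (hp₂ : par w₂ = false) :
    dt (chi w₁) (chi w₂) = 0 := by
  have hcs : ∀ i : Bool, Ev (sec i w₁) * Ev (sec i w₂) = Ev (sec i w₂) * Ev (sec i w₁) := by
    intro i
    have h := comm_sec hc i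
    rwa [hp₁, hp₂, Bool.xor_false] at h
  have hl₁ := chi_sec_linkage w₁
  have hl₂ := chi_sec_linkage w₂
  rw [hp₁] at hl₁; rw [hp₂] at hl₂; norm_num at hl₁ hl₂
  by_cases h1 : Ev (sec true w₁) = 1 ∧ Ev (sec true w₂) = 1
  · have z1 := chi_eq_zero_of_Ev_eq_one h1.1
    have z2 := chi_eq_zero_of_Ev_eq_one h1.2
    have z1' := congrArg Prod.fst z1
    have z2' := congrArg Prod.fst z2
    simp only [Prod.fst_zero] at z1' z2'
    have q1 : (chi w₁).2 = 0 := by rw [chi_comp2]; linarith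
    have q2 : (chi w₂).2 = 0 := by rw [chi_comp2]; linarith
    simp only [dt, q1, q2]; ring
  · by_cases h0 : Ev (sec false w₁) = 1 ∧ Ev (sec false w₂) = 1
    · have z1 := chi_eq_zero_of_Ev_eq_one h0.1
      have z2 := chi_eq_zero_of_Ev_eq_one h0.2
      have z1' := congrArg Prod.fst z1
      have z2' := congrArg Prod.fst z2
      simp only [Prod.fst_zero] at z1' z2'
      have q1 : (chi w₁).2 = 0 := by rw [chi_comp2]; linarith
      have q2 : (chi w₂).2 = 0 := by rw [chi_comp2]; linarith
      simp only [dt, q1, q2]; ring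
    · -- main branch: both section pairs strictly smaller
      have hne1 : sec true w₁ ≠ [] ∨ sec true w₂ ≠ [] := by
        rcases not_and_or.mp h1 with h | h
        · exact Or.inl (fun he => h (by rw [he]; rfl))
        · exact Or.inr (fun he => h (by rw [he]; rfl))
      have hne0 : sec false w₁ ≠ [] ∨ sec false w₂ ≠ [] := by
        rcases not_and_or.mp h0 with h | h
        · exact Or.inl (fun he => h (by rw [he]; rfl))
        · exact Or.inr (fun he => h (by rw [he]; rfl))
      have hsl₁ := sec_length w₁
      have hsl₂ := sec_length w₂
      have hpos1 : 0 < (sec true w₁).length + (sec true w₂).length := by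
        rcases hne1 with h | h <;>
          [exact Nat.lt_of_lt_of_le (List.length_pos_iff.mpr h) (Nat.le_add_right _ _);
           exact Nat.lt_of_lt_of_le (List.length_pos_iff.mpr h) (Nat.le_add_left _ _)]
      have hpos0 : 0 < (sec false w₁).length + (sec false w₂).length := by
        rcases hne0 with h | h <;>
          [exact Nat.lt_of_lt_of_le (List.length_pos_iff.mpr h) (Nat.le_add_right _ _);
           exact Nat.lt_of_lt_of_le (List.length_pos_iff.mpr h) (Nat.le_add_left _ _)]
      have d0 := ih (sec false w₁) (sec false w₂) (by omega) (hcs false)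
      have d1 := ih (sec true w₁) (sec true w₂) (by omega) (hcs true)
      simp only [dt] at d0 d1 ⊢
      rw [chi_comp1 w₁, chi_comp2 w₁, chi_comp1 w₂, chi_comp2 w₂]
      linear_combination (-2 : ℤ) * d0 - 2 * d1
        + ((chi (sec false w₂)).2 - (chi (sec true w₂)).2) * hl₁
        - ((chi (sec false w₁)).2 - (chi (sec true w₁)).2) * hl₂

/-- Case B: first word inactive, second active. -/
lemma caseB {M : ℕ} (ih : IHP M) {w₁ w₂ : Word} (hlen : w₁.length + w₂.length ≤ M)
    (hc : Ev w₁ * Ev w₂ = Ev w₂ * Ev w₁) (hp₁ : par w₁ = false) (hp₂ : par w₂ = true) :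
    dt (chi w₁) (chi w₂) = 0 := by
  have r1 : Ev (sec true w₁) * Ev (sec false w₂) = Ev (sec false w₂) * Ev (sec false w₁) := by
    have h := comm_sec hc false
    rwa [hp₁, hp₂, Bool.xor_false, Bool.false_xor] at h
  have r2 : Ev (sec false w₁) * Ev (sec true w₂) = Ev (sec true w₂) * Ev (sec true w₁) := by
    have h := comm_sec hc true
    rwa [hp₁, hp₂, Bool.xor_false, Bool.true_xor, Bool.not_true] at h
  by_cases h0 : Ev (sec false w₁) = 1
  · have h1 : Ev (sec true w₁) = 1 := by
      have : Ev (sec true w₁) * Ev (sec false w₂) = Ev (sec false w₂) := by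
        rw [r1, h0, mul_one]
      exact mul_right_cancel (by rw [this, one_mul])
    have hw : Ev w₁ = 1 := Ev_eq_one_of hp₁ h0 h1
    have := chi_eq_zero_of_Ev_eq_one hw
    simp [dt, this]
  · have h1 : Ev (sec true w₁) ≠ 1 := by
      intro h1
      apply h0
      have : Ev (sec false w₂) * Ev (sec false w₁) = Ev (sec false w₂) := by
        rw [← r1, h1, one_mul]
      exact mul_left_cancel (by rw [this, mul_one])
    have hne : sec true w₁ ≠ [] := fun he => h1 (by rw [he]; rfl)
    have hsl₁ := sec_length w₁
    have hsl₂ := sec_length w₂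
    have hlen' : (sec false w₁).length + (sec true w₂ ++ sec false w₂).length < M := by
      rw [List.length_append]
      have := List.length_pos_iff.mpr hne
      omega
    have hcom : Ev (sec false w₁) * Ev (sec true w₂ ++ sec false w₂)
        = Ev (sec true w₂ ++ sec false w₂) * Ev (sec false w₁) := by
      rw [Ev_append, ← mul_assoc, r2, mul_assoc, r1, ← mul_assoc]
    have d := ih _ _ hlen' hcom
    have hconj : chi (sec true w₁) = chi (sec false w₁) := by
      have hEv : Ev (sec true w₁)
          = Ev (sec false w₂ ++ sec false w₁ ++ invW (sec false w₂)) := by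
        rw [Ev_append, Ev_append, Ev_invW, ← r1, mul_assoc, mul_inv_cancel, mul_one]
      rw [chi_eq_of_Ev_eq hEv, chi_append, chi_append, chi_invW]
      abel
    simp only [dt] at d ⊢
    rw [chi_append] at d
    rw [chi_comp1 w₁, chi_comp2 w₁, chi_comp1 w₂, chi_comp2 w₂]
    have hc1 := congrArg Prod.fst hconj
    have hc2 := congrArg Prod.snd hconj
    simp only [Prod.fst_add, Prod.snd_add] at d
    linear_combination (-2 : ℤ) * d
      + ((chi (sec false w₂)).1 + (chi (sec true w₂)).1) * hc2
      - ((chi (sec false w₂)).2 + (chi (sec true w₂)).2) * hc1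

/-- Dispatcher for the non-(σ,σ) cases. -/
lemma nonSS {M : ℕ} (ih : IHP M) {w₁ w₂ : Word} (hlen : w₁.length + w₂.length ≤ M)
    (hc : Ev w₁ * Ev w₂ = Ev w₂ * Ev w₁) (h : ¬(par w₁ = true ∧ par w₂ = true)) :
    dt (chi w₁) (chi w₂) = 0 := by
  cases hp₁ : par w₁
  · cases hp₂ : par w₂
    · exact caseA ih hlen hc hp₁ hp₂
    · exact caseB ih hlen hc hp₁ hp₂
  · cases hp₂ : par w₂
    · have h' := caseB ih (show w₂.length + w₁.length ≤ M by omega) hc.symm hp₂ hp₁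
      simp only [dt] at h' ⊢
      linarith
    · exact absurd ⟨hp₁, hp₂⟩ h

/-- The first-return word. -/
def FW (w : Word) : Word := sec true w ++ sec false w

lemma FW_length (w : Word) : (FW w).length = w.length := by
  rw [FW, List.length_append, add_comm]
  exact sec_length w

lemma chi_FW (w : Word) : chi (FW w) = ((chi w).2, (chi w).1) := by
  rw [FW, chi_append, add_comm]
  exact chi_sec_sum w

lemma FW_comm {w₁ w₂ : Word} (hc : Ev w₁ * Ev w₂ = Ev w₂ * Ev w₁)
    (hp₁ : par w₁ = true) (hp₂ : par w₂ = true) :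
    Ev (FW w₁) * Ev (FW w₂) = Ev (FW w₂) * Ev (FW w₁) := by
  have r1 : Ev (sec true w₁) * Ev (sec false w₂) = Ev (sec true w₂) * Ev (sec false w₁) := by
    have h := comm_sec hc false
    rwa [hp₁, hp₂, Bool.false_xor] at h
  have r2 : Ev (sec false w₁) * Ev (sec true w₂) = Ev (sec false w₂) * Ev (sec true w₁) := by
    have h := comm_sec hc true
    rwa [hp₁, hp₂, Bool.true_xor, Bool.not_true] at h
  rw [FW, FW, Ev_append, Ev_append]
  calc Ev (sec true w₁) * Ev (sec false w₁) * (Ev (sec true w₂) * Ev (sec false w₂))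
      = Ev (sec true w₁) * (Ev (sec false w₁) * Ev (sec true w₂)) * Ev (sec false w₂) := by
        rw [mul_assoc, mul_assoc, mul_assoc]
    _ = Ev (sec true w₁) * (Ev (sec false w₂) * Ev (sec true w₁)) * Ev (sec false w₂) := by
        rw [r2]
    _ = (Ev (sec true w₁) * Ev (sec false w₂)) * (Ev (sec true w₁) * Ev (sec false w₂)) := by
        rw [mul_assoc, mul_assoc, mul_assoc]
    _ = (Ev (sec true w₂) * Ev (sec false w₁)) * (Ev (sec true w₂) * Ev (sec false w₁)) := by
        rw [r1]
    _ = Ev (sec true w₂) * (Ev (sec false w₁) * Ev (sec true w₂)) * Ev (sec false w₁) := by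
        rw [mul_assoc, mul_assoc, mul_assoc]
    _ = Ev (sec true w₂) * (Ev (sec false w₂) * Ev (sec true w₁)) * Ev (sec false w₁) := by
        rw [r2]
    _ = Ev (sec true w₂) * Ev (sec false w₂) * (Ev (sec true w₁) * Ev (sec false w₁)) := by
        rw [mul_assoc, mul_assoc, mul_assoc]

/-- Case C via iteration: the pair eventually leaves the (σ,σ) regime. -/
lemma caseC_aux {M : ℕ} (ih : IHP M) :
    ∀ (i : ℕ) (w₁ w₂ : Word), w₁.length + w₂.length ≤ M →
    Ev w₁ * Ev w₂ = Ev w₂ * Ev w₁ →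
    ¬(par (FW^[i] w₁) = true ∧ par (FW^[i] w₂) = true) →
    dt (chi w₁) (chi w₂) = 0 := by
  intro i
  induction i with
  | zero =>
      intro w₁ w₂ hlen hc h
      simp only [Function.iterate_zero, id_eq] at h
      exact nonSS ih hlen hc h
  | succ i ihi =>
      intro w₁ w₂ hlen hc h
      by_cases hσ : par w₁ = true ∧ par w₂ = true
      · have hc' := FW_comm hc hσ.1 hσ.2
        have hlen' : (FW w₁).length + (FW w₂).length ≤ M := by
          rw [FW_length, FW_length]; exact hlen
        have h' : ¬(par (FW^[i] (FW w₁)) = true ∧ par (FW^[i] (FW w₂)) = true) := by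
          rw [← Function.iterate_succ_apply, ← Function.iterate_succ_apply]
          exact h
        have hd := ihi (FW w₁) (FW w₂) hlen' hc' h'
        rw [chi_FW, chi_FW] at hd
        simp only [dt] at hd ⊢
        linarith
      · exact nonSS ih hlen hc hσ

end NB
namespace NB

lemma sq_apply_cons {w : Word} (hp : par w = true) (u : List Bool) :
    (Ev w * Ev w) (false :: u) = false :: Ev (FW w) u := by
  rw [Equiv.Perm.mul_apply, Ev_apply_cons, hp, Bool.xor_true, Bool.not_false,
    Ev_apply_cons, hp, Bool.xor_true, Bool.not_true, FW, Ev_append, Equiv.Perm.mul_apply]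

lemma pow_apply_cons_false {w : Word} (hp : par w = true) (j : ℕ) (u : List Bool) :
    (Ev w ^ (2 * j)) (false :: u) = false :: ((Ev (FW w)) ^ j) u := by
  induction j generalizing u with
  | zero => simp
  | succ j ih =>
      have h2 : Ev w ^ (2 * (j + 1)) = Ev w ^ (2 * j) * (Ev w * Ev w) := by
        rw [← pow_two, ← pow_add]; ring_nf
      have h3 : ((Ev (FW w)) ^ (j + 1)) u = ((Ev (FW w)) ^ j) (Ev (FW w) u) := by
        rw [pow_succ, Equiv.Perm.mul_apply]
      rw [h2, Equiv.Perm.mul_apply, sq_apply_cons hp, ih, h3]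

lemma Ev_inv_length (w : Word) (v : List Bool) : ((Ev w)⁻¹ v).length = v.length := by
  rw [← Ev_invW]; exact Ev_length _ _

lemma Ev_pow_length (w : Word) (t : ℕ) (v : List Bool) :
    ((Ev w ^ t) v).length = v.length := by
  induction t generalizing v with
  | zero => simp
  | succ t ih => rw [pow_succ', Equiv.Perm.mul_apply, Ev_length, ih]

/-- Spinal elements are level transitive. -/
lemma trans_lemma : ∀ (n : ℕ) (w : Word), (∀ i, par (FW^[i] w) = true) →
    ∀ v : List Bool, v.length = n → ∃ j : ℕ, (Ev w ^ j) (List.replicate n false) = v := by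
  intro n
  induction n with
  | zero =>
      intro w _ v hv
      rw [List.length_eq_zero_iff] at hv
      exact ⟨0, by simp [hv]⟩
  | succ n ihn =>
      intro w hw v hv
      have hw' : ∀ i, par (FW^[i] (FW w)) = true := by
        intro i
        rw [← Function.iterate_succ_apply]
        exact hw (i + 1)
      have hp : par w = true := hw 0
      cases v with
      | nil => simp at hv
      | cons i v' =>
          have hv' : v'.length = n := by simpa using hv
          cases i
          · obtain ⟨j, hj⟩ := ihn (FW w) hw' v' hv'
            refine ⟨2 * j, ?_⟩
            rw [show List.replicate (n+1) false = false :: List.replicate n false from rfl,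
              pow_apply_cons_false hp j, hj]
          · have hu' : ((Ev (sec false w))⁻¹ v').length = n := by
              rw [Ev_inv_length]; exact hv'
            obtain ⟨j, hj⟩ := ihn (FW w) hw' _ hu'
            refine ⟨2 * j + 1, ?_⟩
            rw [pow_succ', Equiv.Perm.mul_apply,
              show List.replicate (n+1) false = false :: List.replicate n false from rfl,
              pow_apply_cons_false hp j, hj, Ev_apply_cons, hp]
            simp

/-- Iterated section along a path. -/
def secP : List Bool → Word → Word
  | [], w => w
  | i :: v, w => secP v (sec i w)

lemma Ev_apply_append (w : Word) (v z : List Bool) :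
    Ev w (v ++ z) = Ev w v ++ Ev (secP v w) z := by
  induction v generalizing w with
  | nil => simp [secP]
  | cons i v' ih =>
      rw [List.cons_append, Ev_apply_cons, Ev_apply_cons, List.cons_append]
      congr 1
      exact ih (sec i w)

lemma Ev_join_replicate (t : ℕ) (u : Word) :
    Ev ((List.replicate t u).flatten) = (Ev u) ^ t := by
  induction t with
  | zero => simp [Ev]
  | succ t ih =>
      rw [show List.replicate (t+1) u = u :: List.replicate t u from rfl]
      rw [show (u :: List.replicate t u).flatten = u ++ (List.replicate t u).flatten from rfl]
      rw [Ev_append, ih, pow_succ']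

lemma chi_join_replicate (t : ℕ) (u : Word) :
    chi ((List.replicate t u).flatten) = ((t : ℤ) * (chi u).1, (t : ℤ) * (chi u).2) := by
  induction t with
  | zero => simp; rfl
  | succ t ih =>
      rw [show List.replicate (t+1) u = u :: List.replicate t u from rfl]
      rw [show (u :: List.replicate t u).flatten = u ++ (List.replicate t u).flatten from rfl]
      rw [chi_append, ih]
      rw [Prod.ext_iff]
      constructor <;> simp <;> push_cast <;> ring

/-- The odometer case: the first word is spinal forever. -/
lemma odometer_case {w₁ w₂ : Word}
    (hc : Ev w₁ * Ev w₂ = Ev w₂ * Ev w₁)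
    (hall1 : ∀ i, par (FW^[i] w₁) = true) :
    dt (chi w₁) (chi w₂) = 0 := by
  have hcm : Commute (Ev w₁) (Ev w₂) := hc
  -- for each m, approximate w₂ by a power of w₁ up to level m
  have key : ∀ m : ℕ, ∃ t : ℕ,
      TrivL m (Ev (w₂ ++ (List.replicate t (invW w₁)).flatten)) := by
    intro m
    have hlen0 : (Ev w₂ (List.replicate m false)).length = m := by
      rw [Ev_length]; simp
    obtain ⟨t, ht⟩ := trans_lemma m w₁ hall1 (Ev w₂ (List.replicate m false)) hlen0
    refine ⟨t, ?_⟩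
    have hyx : ∀ v : List Bool, v.length = m → Ev w₂ v = (Ev w₁ ^ t) v := by
      intro v hv
      obtain ⟨j, hj⟩ := trans_lemma m w₁ hall1 v hv
      rw [← hj]
      have e1 : Ev w₂ ((Ev w₁ ^ j) (List.replicate m false))
          = (Ev w₁ ^ j) (Ev w₂ (List.replicate m false)) := by
        rw [← Equiv.Perm.mul_apply, ← Equiv.Perm.mul_apply, (hcm.symm.pow_right j).eq]
      rw [e1, ← ht, ← Equiv.Perm.mul_apply, ← Equiv.Perm.mul_apply, ← pow_add,
        ← pow_add, Nat.add_comm]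
    -- the element Ev w₂ * (Ev w₁)⁻¹ ^ t fixes every word of length exactly m
    have hEq : Ev (w₂ ++ (List.replicate t (invW w₁)).flatten)
        = Ev w₂ * ((Ev w₁)⁻¹) ^ t := by
      rw [Ev_append, Ev_join_replicate, Ev_invW]
    have hfix : ∀ v : List Bool, v.length = m →
        Ev (w₂ ++ (List.replicate t (invW w₁)).flatten) v = v := by
      intro v hv
      rw [hEq, Equiv.Perm.mul_apply, inv_pow]
      have hq : (((Ev w₁ ^ t)⁻¹) v).length = m := by
        rw [show (Ev w₁ ^ t)⁻¹ = Ev (invW ((List.replicate t w₁).flatten)) by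
          rw [Ev_invW, Ev_join_replicate]]
        rw [Ev_length]; exact hv
      rw [hyx _ hq]; exact Equiv.apply_symm_apply _ _
    -- upgrade to all words of length at most m
    intro v hv
    set W := w₂ ++ (List.replicate t (invW w₁)).flatten with hW
    have hpad : Ev W (v ++ List.replicate (m - v.length) false)
        = v ++ List.replicate (m - v.length) false := by
      apply hfix
      simp only [List.length_append, List.length_replicate]
      omega
    rw [Ev_apply_append] at hpad
    have hlen2 : (Ev W v).length = v.length := Ev_length _ _
    exact (List.append_inj hpad (by rw [hlen2])).1
  -- divisibility of the determinant
  have hdvd : ∀ k : ℕ, (2 : ℤ) ^ k ∣ dt (chi w₁) (chi w₂) := by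
    intro k
    obtain ⟨t, ht⟩ := key (2 * k)
    obtain ⟨d1, d2⟩ := val_lemma k _ ht
    rw [chi_append, chi_join_replicate, chi_invW] at d1 d2
    simp only [Prod.fst_add, Prod.snd_add, Prod.fst_neg, Prod.snd_neg] at d1 d2
    -- d1 : 2^k ∣ (chi w₂).1 + t * (-(chi w₁).1), similarly d2
    simp only [dt]
    have e : (chi w₁).1 * (chi w₂).2 - (chi w₁).2 * (chi w₂).1
        = (chi w₁).1 * ((chi w₂).2 + (t : ℤ) * (-(chi w₁).2))
          - (chi w₁).2 * ((chi w₂).1 + (t : ℤ) * (-(chi w₁).1)) := by ring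
    rw [e]
    exact dvd_sub (Dvd.dvd.mul_left d2 _) (Dvd.dvd.mul_left d1 _)
  exact int_eq_zero_of_dvd _ hdvd

/-- The main theorem: commuting elements of the Basilica group have
proportional abelianisation vectors. -/
theorem K_main : ∀ (M : ℕ) (w₁ w₂ : Word), w₁.length + w₂.length ≤ M →
    Ev w₁ * Ev w₂ = Ev w₂ * Ev w₁ → dt (chi w₁) (chi w₂) = 0 := by
  intro M
  induction M using Nat.strong_induction_on with
  | _ M IH =>
      have ih : IHP M := by
        intro u₁ u₂ hl hc
        exact IH (u₁.length + u₂.length) (by omega) u₁ u₂ le_rfl hc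
      intro w₁ w₂ hlen hc
      by_cases hσ : par w₁ = true ∧ par w₂ = true
      · by_cases hall : ∀ i : ℕ, par (FW^[i] w₁) = true ∧ par (FW^[i] w₂) = true
        · exact odometer_case hc (fun i => (hall i).1)
        · obtain ⟨i, hi⟩ := not_forall.mp hall
          exact caseC_aux ih i w₁ w₂ hlen hc hi
      · exact nonSS ih hlen hc hσ

/-- Element-level version. -/
theorem K_elt {g h : Perm (List Bool)} (hg : g ∈ BasilicaGroup) (hh : h ∈ BasilicaGroup)
    (hc : g * h = h * g) : dt (Xi0 g) (Xi0 h) = 0 := by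
  obtain ⟨u, rfl⟩ := (mem_B_iff g).mp hg
  obtain ⟨v, rfl⟩ := (mem_B_iff h).mp hh
  rw [Xi0_Ev, Xi0_Ev]
  exact K_main (u.length + v.length) u v le_rfl hc

end NB
section TreeSide

variable {A : ℕ → Type}

lemma rist_le {G : Subgroup (Perm (Vertex A))} {v : Vertex A} : rist A G v ≤ G :=
  fun _ hx => hx.1

/-- Two comparable prefixes at the same level agree. -/
lemma IsPref_eq_of_level {v w u : Vertex A} (hv : IsPref A v u) (hw : IsPref A w u)
    (h : v.1 = w.1) : v = w := by
  obtain ⟨n, f⟩ := v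
  obtain ⟨m, g⟩ := w
  obtain ⟨N, F⟩ := u
  simp only at h
  subst h
  obtain ⟨h1, h2⟩ := hv
  obtain ⟨h3, h4⟩ := hw
  have hfg : f = g := by
    funext i
    have e2 := h2 i
    have e4 := h4 i
    simp only at e2 e4
    rw [e2, e4]
  rw [hfg]

/-- Elements of a rigid stabiliser map moved points into the cylinder. -/
lemma rist_moves_into {G : Subgroup (Perm (Vertex A))} {v : Vertex A}
    {x : Perm (Vertex A)} (hx : x ∈ rist A G v) (u : Vertex A) (hne : x u ≠ u) :
    IsPref A v (x u) := by
  by_contra h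
  exact hne (x.injective (hx.2 (x u) h))

/-- Rigid stabilisers of distinct same-level vertices commute elementwise. -/
lemma rist_commute {G : Subgroup (Perm (Vertex A))} {v w : Vertex A} (hvw : v ≠ w)
    (hlev : v.1 = w.1) {x y : Perm (Vertex A)}
    (hx : x ∈ rist A G v) (hy : y ∈ rist A G w) : x * y = y * x := by
  apply Equiv.ext
  intro u
  simp only [Equiv.Perm.mul_apply]
  by_cases hu : IsPref A v u
  · have hwu : ¬ IsPref A w u := fun h => hvw (IsPref_eq_of_level hu h hlev)
    rw [hy.2 u hwu]
    by_cases hxu : x u = u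
    · rw [hxu, hy.2 u hwu]
    · have h1 : IsPref A v (x u) := rist_moves_into hx u hxu
      have h2 : ¬ IsPref A w (x u) := fun h => hvw (IsPref_eq_of_level h1 h hlev)
      rw [hy.2 (x u) h2]
  · rw [hx.2 u hu]
    by_cases hwu : IsPref A w u
    · by_cases hyu : y u = u
      · rw [hyu, hx.2 u hu]
      · have h1 : IsPref A w (y u) := rist_moves_into hy u hyu
        have h2 : ¬ IsPref A v (y u) := fun h => hvw (IsPref_eq_of_level h h1 hlev)
        rw [hx.2 (y u) h2]
    · rw [hy.2 u hwu, hx.2 u hu]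

/-- Conjugation carries rigid stabilisers to rigid stabilisers. -/
lemma conj_mem_rist {G : Subgroup (Perm (Vertex A))} (hG : G ≤ treeAut A)
    {g z : Perm (Vertex A)} (hg : g ∈ G) {v : Vertex A} (hz : z ∈ rist A G v) :
    g * z * g⁻¹ ∈ rist A G (g v) := by
  refine ⟨G.mul_mem (G.mul_mem hg hz.1) (G.inv_mem hg), ?_⟩
  intro u hu
  have hg' : ∀ a b, IsPref A a b ↔ IsPref A (g a) (g b) := hG hg
  have h1 : ¬ IsPref A v (g⁻¹ u) := by
    intro h
    apply hu
    have h2 := (hg' v (g⁻¹ u)).mp h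
    rwa [show g (g⁻¹ u) = u from Equiv.apply_symm_apply g u] at h2
  simp only [Equiv.Perm.mul_apply, hz.2 _ h1, show g (g⁻¹ u) = u from Equiv.apply_symm_apply g u]

end TreeSide
/-- The Basilica group is not a branch group: no branch group
on any spherically homogeneous rooted tree is isomorphic to it. -/
theorem basilica_not_branch :
    ¬ ∃ (A : ℕ → Type) (G : Subgroup (Perm (Vertex A))),
      (∀ i, Finite (A i)) ∧ (∀ i, 2 ≤ Nat.card (A i)) ∧ IsBranch A G ∧
        Nonempty (↥G ≃* ↥BasilicaGroup) := by
  rintro ⟨A, G, hfin, hcard, ⟨⟨hle, htrans, -⟩, hindex⟩, ⟨e⟩⟩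
  haveI := hfin 0
  have hnt : Nontrivial (A 0) :=
    Finite.one_lt_card_iff_nontrivial.mp (by have := hcard 0; omega)
  obtain ⟨a₀, a₁, ha⟩ := exists_pair_ne (A 0)
  -- two distinct level-1 vertices
  let mkv : A 0 → Vertex A := fun a =>
    ⟨1, fun i => cast (congrArg A (by have := i.isLt; omega : (0 : ℕ) = (i : ℕ))) a⟩
  let Fd : Vertex A → (A 0) ⊕ Unit := fun z =>
    if h : 0 < z.1 then
      Sum.inl (cast (congrArg A (rfl : (((⟨0, h⟩ : Fin z.1) : ℕ)) = 0)) (z.2 ⟨0, h⟩))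
    else Sum.inr ()
  have hFd : ∀ a : A 0, Fd (mkv a) = Sum.inl a := fun a => rfl
  have hmkinj : Function.Injective mkv := by
    intro a b h
    have h2 := congrArg Fd h
    rw [hFd, hFd] at h2
    exact Sum.inl.inj h2
  set v : Vertex A := mkv a₀ with hvdef
  set w : Vertex A := mkv a₁ with hwdef
  have hvw : v ≠ w := fun h => ha (hmkinj h)
  have hv1 : v.1 = 1 := rfl
  have hw1 : w.1 = 1 := rfl
  -- the character
  set Φ : ↥G →* Multiplicative (ℤ × ℤ) := NB.XiM.comp e.toMonoidHom with hΦdef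
  have haB : aP ∈ BasilicaGroup := Subgroup.subset_closure (by simp)
  have hbB : bP ∈ BasilicaGroup := Subgroup.subset_closure (by simp)
  set α : ↥G := e.symm ⟨aP, haB⟩ with hαdef
  set β : ↥G := e.symm ⟨bP, hbB⟩ with hβdef
  have hEva : NB.Ev [(false, false)] = aP := by simp [NB.Ev, NB.evalL]
  have hEvb : NB.Ev [(true, false)] = bP := by simp [NB.Ev, NB.evalL]
  have hXa : NB.Xi0 aP = ((1 : ℤ), (0 : ℤ)) := by
    rw [← hEva, NB.Xi0_Ev]; rfl
  have hXb : NB.Xi0 bP = ((0 : ℤ), (1 : ℤ)) := by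
    rw [← hEvb, NB.Xi0_Ev]; rfl
  have hΦα : Φ α = Multiplicative.ofAdd ((1 : ℤ), (0 : ℤ)) := by
    have h1 : Φ α = NB.XiM (e (e.symm ⟨aP, haB⟩)) := rfl
    rw [h1, MulEquiv.apply_symm_apply]
    show Multiplicative.ofAdd (NB.Xi0 aP) = _
    rw [hXa]
  have hΦβ : Φ β = Multiplicative.ofAdd ((0 : ℤ), (1 : ℤ)) := by
    have h1 : Φ β = NB.XiM (e (e.symm ⟨bP, hbB⟩)) := rfl
    rw [h1, MulEquiv.apply_symm_apply]
    show Multiplicative.ofAdd (NB.Xi0 bP) = _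
    rw [hXb]
  have hsurj : Function.Surjective Φ := by
    intro t
    refine ⟨α ^ (t.toAdd).1 * β ^ (t.toAdd).2, ?_⟩
    rw [map_mul, map_zpow, map_zpow, hΦα, hΦβ, ← ofAdd_zsmul, ← ofAdd_zsmul, ← ofAdd_add]
    have h2 : (t.toAdd).1 • ((1 : ℤ), (0 : ℤ)) + (t.toAdd).2 • ((0 : ℤ), (1 : ℤ))
        = t.toAdd := by
      apply Prod.ext <;> simp
    rw [h2]
    exact ofAdd_toAdd t
  -- the rigid stabiliser images
  set Rv : Subgroup ↥G := (rist A G v).subgroupOf G with hRvdef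
  set Rw : Subgroup ↥G := (rist A G w).subgroupOf G with hRwdef
  set L : Subgroup (Multiplicative (ℤ × ℤ)) := Subgroup.map Φ Rv with hLdef
  have himg : ∀ v' w' : Vertex A, v'.1 = 1 → w'.1 = 1 →
      Subgroup.map Φ ((rist A G v').subgroupOf G)
        ≤ Subgroup.map Φ ((rist A G w').subgroupOf G) := by
    intro v' w' hv' hw'
    intro t ht
    obtain ⟨x, hx, rfl⟩ := Subgroup.mem_map.mp ht
    rw [Subgroup.mem_subgroupOf] at hx
    obtain ⟨g, hgG, hgv⟩ := htrans v' w' (by rw [hv', hw'])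
    have hz : g * ↑x * g⁻¹ ∈ rist A G (g v') := conj_mem_rist hle hgG hx
    rw [hgv] at hz
    refine Subgroup.mem_map.mpr
      ⟨⟨g, hgG⟩ * x * ⟨g, hgG⟩⁻¹, Subgroup.mem_subgroupOf.mpr (by simpa using hz), ?_⟩
    rw [map_mul, map_mul, map_inv]
    rw [mul_comm (Φ ⟨g, hgG⟩) (Φ x), mul_assoc, mul_inv_cancel, mul_one]
  have hLw : Subgroup.map Φ Rw = L :=
    le_antisymm (himg w v hw1 hv1) (himg v w hv1 hw1)
  -- the image of the level-1 rigid stabiliser is contained in L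
  have hristle : Subgroup.map Φ ((ristLevel A G 1).subgroupOf G) ≤ L := by
    intro t ht
    obtain ⟨x, hx, rfl⟩ := Subgroup.mem_map.mp ht
    rw [Subgroup.mem_subgroupOf] at hx
    have key : ∀ z, z ∈ (⨆ u : Vertex A, ⨆ _ : u.1 = 1, rist A G u) →
        ∃ hzG : z ∈ G, Φ ⟨z, hzG⟩ ∈ L := by
      intro z hz
      refine Subgroup.iSup_induction
        (fun u : Vertex A => ⨆ _ : u.1 = 1, rist A G u)
        (C := fun z => ∃ hzG : z ∈ G, Φ ⟨z, hzG⟩ ∈ L) hz ?_ ?_ ?_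
      · intro u x' hx'
        have hx2 : x' ∈ ⨆ _ : u.1 = 1, rist A G u := hx'
        by_cases hu : u.1 = 1
        · rw [iSup_pos hu] at hx2
          refine ⟨rist_le hx2, ?_⟩
          exact himg u v hu hv1 (Subgroup.mem_map.mpr
            ⟨⟨x', rist_le hx2⟩, Subgroup.mem_subgroupOf.mpr hx2, rfl⟩)
        · rw [iSup_neg hu] at hx2
          have hx1 : x' = 1 := Subgroup.mem_bot.mp hx2
          subst hx1
          refine ⟨G.one_mem, ?_⟩
          rw [show (⟨1, G.one_mem⟩ : ↥G) = 1 from rfl, map_one]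
          exact L.one_mem
      · refine ⟨G.one_mem, ?_⟩
        rw [show (⟨1, G.one_mem⟩ : ↥G) = 1 from rfl, map_one]
        exact L.one_mem
      · rintro z₁ z₂ ⟨h1, p1⟩ ⟨h2, p2⟩
        refine ⟨G.mul_mem h1 h2, ?_⟩
        have hmm : (⟨z₁ * z₂, G.mul_mem h1 h2⟩ : ↥G) = ⟨z₁, h1⟩ * ⟨z₂, h2⟩ := rfl
        rw [hmm, map_mul]
        exact L.mul_mem p1 p2
    obtain ⟨hzG, hp⟩ := key ↑x hx
    have hxx : x = ⟨↑x, hzG⟩ := Subtype.ext rfl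
    rw [hxx]
    exact hp
  -- finite index of L
  have hrel : ((ristLevel A G 1).subgroupOf G).index ≠ 0 := hindex 1
  have hdvd : L.index ∣ ((ristLevel A G 1).subgroupOf G).index :=
    dvd_trans (Subgroup.index_dvd_of_le hristle)
      (Subgroup.index_map_dvd ((ristLevel A G 1).subgroupOf G) hsurj)
  have hLind : L.index ≠ 0 := by
    intro h0
    rw [h0] at hdvd
    exact hrel (Nat.eq_zero_of_zero_dvd hdvd)
  haveI : L.FiniteIndex := ⟨hLind⟩
  set m : ℕ := L.index with hmdef
  -- elements with prescribed characters in the two rigid stabilisers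
  have hmem1 : Multiplicative.ofAdd ((m : ℤ), (0 : ℤ)) ∈ L := by
    have hp := Subgroup.pow_index_mem L (Multiplicative.ofAdd ((1 : ℤ), (0 : ℤ)))
    rw [← ofAdd_nsmul] at hp
    have h2 : m • ((1 : ℤ), (0 : ℤ)) = ((m : ℤ), (0 : ℤ)) := by
      apply Prod.ext <;> simp
    rwa [h2] at hp
  have hmem2 : Multiplicative.ofAdd ((0 : ℤ), (m : ℤ)) ∈ Subgroup.map Φ Rw := by
    rw [hLw]

    have hp := Subgroup.pow_index_mem L (Multiplicative.ofAdd ((0 : ℤ), (1 : ℤ)))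
    rw [← ofAdd_nsmul] at hp
    have h2 : m • ((0 : ℤ), (1 : ℤ)) = ((0 : ℤ), (m : ℤ)) := by
      apply Prod.ext <;> simp
    rwa [h2] at hp
  rw [hLdef] at hmem1
  obtain ⟨x, hxmem, hxval⟩ := Subgroup.mem_map.mp hmem1
  obtain ⟨y, hymem, hyval⟩ := Subgroup.mem_map.mp hmem2
  rw [hRvdef, Subgroup.mem_subgroupOf] at hxmem
  rw [hRwdef, Subgroup.mem_subgroupOf] at hymem
  -- the two elements commute
  have hcP : (↑x : Perm (Vertex A)) * ↑y = ↑y * ↑x := rist_commute hvw rfl hxmem hymem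
  have hcG : x * y = y * x := Subtype.ext hcP
  have hcB : (↑(e x) : Perm (List Bool)) * ↑(e y) = ↑(e y) * ↑(e x) := by
    have h1 : e x * e y = e y * e x := by rw [← map_mul, ← map_mul, hcG]
    exact congrArg Subtype.val h1
  -- their characters
  have hx2 : NB.Xi0 ↑(e x) = ((m : ℤ), (0 : ℤ)) := by
    have h1 : Φ x = Multiplicative.ofAdd (NB.Xi0 ↑(e x)) := rfl
    have h2 := hxval.symm.trans h1
    exact (Multiplicative.ofAdd.injective h2).symm
  have hy2 : NB.Xi0 ↑(e y) = ((0 : ℤ), (m : ℤ)) := by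
    have h1 : Φ y = Multiplicative.ofAdd (NB.Xi0 ↑(e y)) := rfl
    have h2 := hyval.symm.trans h1
    exact (Multiplicative.ofAdd.injective h2).symm
  -- contradiction with the commutation theorem
  have hK := NB.K_elt (e x).2 (e y).2 hcB
  rw [hx2, hy2] at hK
  simp only [NB.dt] at hK
  norm_num at hK
  exact hLind (by exact_mod_cast hK)

end PaperDefs
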